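/- Let F ⊆ K be finite fields with q = |F| and n = [K : F]. The number of normal elements of K over F, i.e. the number of η ∈ K whose conjugates η, η^q, …, η^{q^{n−1}} are linearly independent over F, equals Φ(xⁿ − 1), the number of units of the quotient ring F[x]/(xⁿ − 1). (Consequently the number of normal bases of K over F is Φ(xⁿ − 1)/n.) -/

import Mathlib

open Polynomial

universe u v

section NormalCount
variable (F : Type u) (K : Type v) [Field F] [Fintype F] [Field K] [Fintype K] [Algebra F K]

/-- The `q`-power Frobenius as an `F`-linear endomorphism of `K`. -/
noncomputable def frobLin : K →ₗ[F] K where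
  toFun x := x ^ Fintype.card F
  map_add' x y := by
    obtain ⟨m, hp, hq⟩ := FiniteField.card F (ringChar F)
    haveI : Fact (Nat.Prime (ringChar F)) := ⟨hp⟩
    haveI : CharP K (ringChar F) := charP_of_injective_algebraMap (algebraMap F K).injective _
    simp only [hq]
    exact add_pow_char_pow x y (ringChar F) ↑m
  map_smul' c x := by
    simp only [Algebra.smul_def, mul_pow, RingHom.id_apply]
    rw [← map_pow, FiniteField.pow_card]

lemma frobLin_pow_apply (i : ℕ) (x : K) : (frobLin F K ^ i) x = x ^ Fintype.card F ^ i := by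
  induction i generalizing x with
  | zero => simp
  | succ i ih =>
    rw [pow_succ, Module.End.mul_apply, ih]
    show (x ^ Fintype.card F) ^ Fintype.card F ^ i = _
    rw [← pow_mul, ← pow_succ']

lemma frobLin_pow_finrank : frobLin F K ^ Module.finrank F K = 1 := by
  ext x
  rw [frobLin_pow_apply, Module.End.one_apply, ← Module.card_eq_pow_finrank (K := F) (V := K),
    FiniteField.pow_card]

lemma frobLin_min (g : F[X]) (hdeg : g.natDegree < Module.finrank F K)
    (hg : aeval (frobLin F K) g = 0) : g = 0 := by
  by_contra hg0
  set q := Fintype.card F with hq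
  set m := g.natDegree with hm
  set P : K[X] := ∑ i ∈ Finset.range (m + 1), C (algebraMap F K (g.coeff i)) * X ^ (q ^ i) with hP
  have heval : ∀ x : K, P.eval x = 0 := by
    intro x
    rw [aeval_eq_sum_range] at hg
    have h1 := congrArg (fun ψ : K →ₗ[F] K => ψ x) hg
    simp only [LinearMap.coe_sum, Finset.sum_apply, LinearMap.smul_apply,
      LinearMap.zero_apply] at h1
    rw [hP, eval_finset_sum]
    rw [← h1]
    refine Finset.sum_congr rfl fun i _ => ?_
    rw [eval_mul, eval_pow, eval_C, eval_X, frobLin_pow_apply, Algebra.smul_def]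
  have hcard : P.natDegree < Fintype.card K := by
    have h2 : P.natDegree ≤ q ^ m := by
      refine natDegree_sum_le_of_forall_le _ _ fun i hi => ?_
      refine (natDegree_C_mul_X_pow_le _ _).trans ?_
      exact Nat.pow_le_pow_right Fintype.card_pos (by
        simpa using Nat.lt_succ_iff.mp (Finset.mem_range.mp hi))
    refine h2.trans_lt ?_
    rw [Module.card_eq_pow_finrank (K := F) (V := K)]
    exact Nat.pow_lt_pow_right Fintype.one_lt_card hdeg
  have hP0 : P = 0 :=
    eq_zero_of_natDegree_lt_card_of_eval_eq_zero P Function.injective_id heval hcard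
  have hc : P.coeff (q ^ m) = algebraMap F K (g.coeff m) := by
    rw [hP, finset_sum_coeff]
    rw [Finset.sum_eq_single m]
    · simp [coeff_C_mul, coeff_X_pow]
    · intro i hi hne
      have hne' : q ^ i ≠ q ^ m := fun h =>
        hne (Nat.pow_right_injective Fintype.one_lt_card h)
      simp [coeff_C_mul, coeff_X_pow, Ne.symm hne']
    · intro h
      exact absurd (Finset.self_mem_range_succ m) h
  rw [hP0, coeff_zero] at hc
  exact hg0 (leadingCoeff_eq_zero.mp
    ((_root_.map_eq_zero (algebraMap F K)).mp hc.symm))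

variable {F K}

/-- Cardinality of a module with a finite basis. -/
lemma card_of_basis {V : Type*} [AddCommGroup V] [Module F V] {k : ℕ}
    (b : Module.Basis (Fin k) F V) : Nat.card V = Fintype.card F ^ k := by
  rw [Nat.card_congr (b.repr.toEquiv.trans (Finsupp.equivFunOnFinite)),
    Nat.card_eq_fintype_card, Fintype.card_fun, Fintype.card_fin]

variable (n : ℕ) (hn : Module.finrank F K = n)

open scoped DirectSum
section Main
include hn

lemma aeval_frobLin_cyc : aeval (frobLin F K) ((X : F[X]) ^ n - 1) = 0 := by
  rw [map_sub, map_pow, aeval_X, map_one, sub_eq_zero, ← hn]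
  exact frobLin_pow_finrank F K

lemma cyc_smul_aeval (m : Module.AEval' (frobLin F K)) :
    ((X : F[X]) ^ n - 1) • m = 0 := by
  obtain ⟨x, rfl⟩ := (Module.AEval'.of (frobLin F K)).surjective m
  rw [← Module.AEval.of_aeval_smul, aeval_frobLin_cyc n hn]
  show Module.AEval'.of (frobLin F K) ((0 : Module.End F K) x) = 0
  simp

lemma cyc_ne_zero (hn0 : 0 < n) : ((X : F[X]) ^ n - 1) ≠ 0 := by
  have h := monic_X_pow_sub_C (1 : F) hn0.ne'
  rw [map_one] at h
  exact h.ne_zero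

set_option maxHeartbeats 1600000 in
lemma exists_equiv_quot (hn0 : 0 < n) :
    Nonempty ((Module.AEval' (frobLin F K)) ≃ₗ[F[X]]
      (F[X] ⧸ Ideal.span {(X : F[X]) ^ n - 1})) := by
  classical
  set φ := frobLin F K with hφ
  set f : F[X] := (X : F[X]) ^ n - 1 with hf
  have hf0 : f ≠ 0 := cyc_ne_zero n hn hn0
  -- instances
  haveI : Module.Finite F (Module.AEval' φ) := Module.Finite.equiv (Module.AEval'.of φ)
  haveI : Module.Finite F[X] (Module.AEval' φ) :=
    Module.Finite.of_restrictScalars_finite F _ _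
  haveI : Module.Finite F[X] (ULift.{u} (Module.AEval' φ)) :=
    Module.Finite.equiv (ULift.moduleEquiv (R := F[X]) (M := Module.AEval' φ)).symm
  have htor : Module.IsTorsion F[X] (ULift.{u} (Module.AEval' φ)) := fun m =>
    ⟨⟨f, mem_nonZeroDivisors_of_ne_zero hf0⟩, by
      have : (f • m).down = 0 := cyc_smul_aeval n hn m.down
      exact ULift.ext _ _ this⟩
  obtain ⟨ι, hfin, p, hpirr, e, ⟨iso₀⟩⟩ :=
    Module.equiv_directSum_of_isTorsion (R := F[X]) (M := ULift.{u} (Module.AEval' φ)) htor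
  haveI := hfin
  set d : ι → F[X] := fun i => p i ^ e i with hd
  have hd0 : ∀ i, d i ≠ 0 := fun i => pow_ne_zero _ (hpirr i).ne_zero
  set iso : Module.AEval' φ ≃ₗ[F[X]] ⨁ i, F[X] ⧸ (F[X] ∙ d i) :=
    (ULift.moduleEquiv (R := F[X]) (M := Module.AEval' φ)).symm.trans iso₀ with hiso
  -- any common multiple of the `d i` annihilates the module
  have hannd : ∀ g : F[X], (∀ i, d i ∣ g) → ∀ m : Module.AEval' φ, g • m = 0 := by
    intro g hg m
    have key : g • iso m = 0 := by
      induction iso m using DirectSum.induction_on with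
      | zero => simp
      | of i z =>
        obtain ⟨y, rfl⟩ := Submodule.Quotient.mk_surjective _ z
        rw [← DirectSum.of_smul]
        convert map_zero (DirectSum.of (fun i => F[X] ⧸ (F[X] ∙ d i)) i)
        rw [← Submodule.Quotient.mk_smul, Submodule.Quotient.mk_eq_zero]
        obtain ⟨c, hc⟩ := hg i
        exact Submodule.mem_span_singleton.mpr ⟨c * y, by
          simp [hc, smul_eq_mul]; ring⟩
      | add w₁ w₂ h₁ h₂ => rw [smul_add, h₁, h₂, add_zero]
    have := congrArg iso.symm key
    rwa [map_smul, iso.symm_apply_apply, map_zero] at this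
  -- each `d i` divides `X ^ n - 1`
  have hdvd : ∀ i, d i ∣ f := by
    intro i
    set w : ⨁ i, F[X] ⧸ (F[X] ∙ d i) :=
      DirectSum.of (fun i => F[X] ⧸ (F[X] ∙ d i)) i (Submodule.Quotient.mk 1) with hw
    have h1 : f • w = 0 := by
      have := cyc_smul_aeval n hn (iso.symm w)
      have := congrArg iso this
      rwa [map_smul, iso.apply_symm_apply, map_zero] at this
    have h2 := congrArg (fun v => v i) h1
    simp only [DirectSum.smul_apply, hw, DirectSum.of_eq_same, DirectSum.zero_apply] at h2
    rw [← Submodule.Quotient.mk_smul, Submodule.Quotient.mk_eq_zero] at h2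
    obtain ⟨c, hc⟩ := Submodule.mem_span_singleton.mp h2
    exact ⟨c, by simpa [smul_eq_mul, mul_comm] using hc.symm⟩
  -- cardinality of each cyclic piece
  have hcardpiece : ∀ i, Nat.card (F[X] ⧸ (F[X] ∙ d i)) =
      Fintype.card F ^ (d i).natDegree := by
    intro i
    have e1 : (F[X] ⧸ (F[X] ∙ d i)) ≃ (AdjoinRoot (d i)) :=
      (Submodule.quotEquivOfEq (F[X] ∙ d i) (Ideal.span {d i})
        (Ideal.submodule_span_eq)).toEquiv
    have b := (AdjoinRoot.powerBasis (hd0 i)).basis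
    have hdim : (AdjoinRoot.powerBasis (hd0 i)).dim = (d i).natDegree := rfl
    rw [Nat.card_congr e1, ← hdim]
    exact card_of_basis b
  -- sum of degrees is `n`
  have hdegsum : ∑ i, (d i).natDegree = n := by
    have h1 : Nat.card (Module.AEval' φ) = Fintype.card F ^ n := by
      rw [Nat.card_congr (Module.AEval'.of φ).symm.toEquiv, Nat.card_eq_fintype_card,
        Module.card_eq_pow_finrank (K := F) (V := K), hn]
    have h2 : Nat.card (Module.AEval' φ) = ∏ i, Nat.card (F[X] ⧸ (F[X] ∙ d i)) := by
      rw [Nat.card_congr (iso.toEquiv.trans (DFinsupp.equivFunOnFintype)), Nat.card_pi]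
    rw [h1] at h2
    have h3 : ∏ i, Nat.card (F[X] ⧸ (F[X] ∙ d i)) =
        Fintype.card F ^ (∑ i, (d i).natDegree) := by
      rw [Finset.prod_congr rfl fun i _ => hcardpiece i, ← Finset.prod_pow_eq_pow_sum]
    rw [h3] at h2
    exact (Nat.pow_right_injective Fintype.one_lt_card h2).symm
  -- degrees are positive
  have hdegpos : ∀ i, e i ≠ 0 → 0 < (d i).natDegree := by
    intro i hei
    rw [hd, natDegree_pow]
    exact Nat.mul_pos (Nat.pos_of_ne_zero hei) (hpirr i).natDegree_pos
  -- pairwise coprime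
  have Hco : ∀ i j, i ≠ j → IsCoprime (d i) (d j) := by
    have key : ∀ i j, i ≠ j → e i ≠ 0 → e j ≠ 0 → d i ∣ d j → False := by
      intro i j hij hei hej hdij
      set g : F[X] := ∏ k ∈ Finset.univ.erase i, d k with hg
      have hgd : ∀ k, d k ∣ g := by
        intro k
        rcases eq_or_ne k i with rfl | hk
        · exact hdij.trans (Finset.dvd_prod_of_mem d
            (Finset.mem_erase.mpr ⟨(Ne.symm hij), Finset.mem_univ _⟩))
        · exact Finset.dvd_prod_of_mem d (Finset.mem_erase.mpr ⟨hk, Finset.mem_univ _⟩)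
      have hg0 : g ≠ 0 := Finset.prod_ne_zero_iff.mpr fun k _ => hd0 k
      have hgdeg : g.natDegree < n := by
        have h4 : g.natDegree = ∑ k ∈ Finset.univ.erase i, (d k).natDegree :=
          natDegree_prod _ _ fun k _ => hd0 k
        have h5 : (d i).natDegree + ∑ k ∈ Finset.univ.erase i, (d k).natDegree
            = ∑ k, (d k).natDegree :=
          Finset.add_sum_erase _ (fun k => (d k).natDegree) (Finset.mem_univ i)
        rw [hdegsum] at h5
        have := hdegpos i hei
        omega
      have : aeval φ g = 0 := by
        ext x
        have h6 := hannd g hgd (Module.AEval'.of φ x)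
        rw [← Module.AEval.of_aeval_smul] at h6
        have h7 := (Module.AEval'.of φ).injective (by simpa using h6)
        simpa using h7
      exact hg0 (frobLin_min F K g (hn ▸ hgdeg) this)
    intro i j hij
    by_contra hnc
    rcases eq_or_ne (e i) 0 with hei | hei
    · exact hnc (by rw [hd]; simp only [hei, pow_zero]; exact isCoprime_one_left)
    rcases eq_or_ne (e j) 0 with hej | hej
    · exact hnc (by rw [hd]; simp only [hej, pow_zero]; exact isCoprime_one_right)
    have hnc' : ¬IsCoprime (p i) (p j) := fun h =>
      hnc (by rw [hd]; exact ((IsCoprime.pow_iff (Nat.pos_of_ne_zero hei)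
        (Nat.pos_of_ne_zero hej)).mpr h))
    have hdvdij : p i ∣ p j := ((hpirr i).dvd_iff_not_isCoprime).mpr hnc'
    have hassoc : Associated (p i) (p j) := (hpirr i).associated_of_dvd (hpirr j) hdvdij
    rcases le_total (e i) (e j) with hle | hle
    · exact key i j hij hei hej
        ((hassoc.pow_pow (n := e i)).dvd.trans (pow_dvd_pow _ hle))
    · exact key j i hij.symm hej hei
        ((hassoc.symm.pow_pow (n := e j)).dvd.trans (pow_dvd_pow _ hle))
  -- the product of the `d i` is associated to `X ^ n - 1`
  have Hassoc : Associated (∏ i, d i) f := by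
    have hp1 : (∏ i, d i) ∣ f := Fintype.prod_dvd_of_coprime
      (fun i j hij => Hco i j hij) (fun i => hdvd i)
    obtain ⟨c, hc⟩ := hp1
    have hprod0 : (∏ i, d i) ≠ 0 := Finset.prod_ne_zero_iff.mpr fun k _ => hd0 k
    have hc0 : c ≠ 0 := by rintro rfl; rw [mul_zero] at hc; exact hf0 hc
    have hdegprod : (∏ i, d i).natDegree = n := by
      rw [natDegree_prod _ _ fun k _ => hd0 k, hdegsum]
    have hdegf : f.natDegree = n := by
      rw [hf]
      have : ((X : F[X]) ^ n - C 1).natDegree = n := natDegree_X_pow_sub_C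
      rwa [map_one] at this
    have hcdeg : c.natDegree = 0 := by
      have := natDegree_mul hprod0 hc0
      rw [← hc, hdegf, hdegprod] at this
      omega
    have hcu : IsUnit c := by
      rw [eq_C_of_natDegree_eq_zero hcdeg]
      refine isUnit_C.mpr (isUnit_iff_ne_zero.mpr fun h0 => hc0 ?_)
      rw [eq_C_of_natDegree_eq_zero hcdeg, h0, map_zero]
    exact ⟨hcu.unit, by rw [IsUnit.unit_spec]; exact hc.symm⟩
  -- Chinese remainder theorem gluing
  have Hcoid : Pairwise (Function.onFun IsCoprime fun i => Ideal.span {d i}) := fun i j hij =>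
    (Ideal.isCoprime_span_singleton_iff _ _).mpr (Hco i j hij)
  have hinf : (⨅ i, Ideal.span {d i}) = Ideal.span {f} := by
    rw [Ideal.iInf_span_singleton (fun i j hij => Hco i j hij)]
    exact Ideal.span_singleton_eq_span_singleton.mpr Hassoc
  let crt := Ideal.quotientInfRingEquivPiQuotient (fun i => Ideal.span {d i}) Hcoid
  let crtAlg : ((F[X] ⧸ ⨅ i, Ideal.span {d i}) ≃ₐ[F[X]] Π i, F[X] ⧸ Ideal.span {d i}) :=
    AlgEquiv.ofRingEquiv (f := crt) (by
      intro x
      have h1 : crt (Ideal.Quotient.mk _ x) = fun i => Ideal.Quotient.mk _ x :=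
        Ideal.quotientInfToPiQuotient_mk _ x
      rw [Ideal.Quotient.algebraMap_eq, h1]
      funext i
      rw [Pi.algebraMap_apply, Ideal.Quotient.algebraMap_eq])
  let E2 : (F[X] ⧸ Ideal.span {f}) ≃ₗ[F[X]] Π i, F[X] ⧸ Ideal.span {d i} :=
    (Submodule.quotEquivOfEq _ _ hinf.symm).trans crtAlg.toLinearEquiv
  let E3 : (⨁ i, F[X] ⧸ (F[X] ∙ d i)) ≃ₗ[F[X]] Π i, F[X] ⧸ (F[X] ∙ d i) :=
    DirectSum.linearEquivFunOnFintype F[X] _ _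
  let E4 : (Π i, F[X] ⧸ (F[X] ∙ d i)) ≃ₗ[F[X]] Π i, F[X] ⧸ Ideal.span {d i} :=
    LinearEquiv.piCongrRight fun i => Submodule.quotEquivOfEq _ _ Ideal.submodule_span_eq
  exact ⟨iso.trans (E3.trans (E4.trans E2.symm))⟩

lemma normal_iff_gen (hn0 : 0 < n) (x : K) :
    LinearIndependent F (fun i : Fin n => x ^ Fintype.card F ^ (i : ℕ)) ↔
      Submodule.span F[X] {Module.AEval'.of (frobLin F K) x} = ⊤ := by
  haveI : Nonempty (Fin n) := Fin.pos_iff_nonempty.mp hn0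
  set φ := frobLin F K with hφ
  have hmod : φ ^ n = 1 := hn ▸ frobLin_pow_finrank F K
  have hXi : ∀ i : ℕ, (X ^ i : F[X]) • Module.AEval'.of φ x
      = Module.AEval'.of φ ((φ ^ i) x) := by
    intro i
    rw [← Module.AEval.of_aeval_smul]
    congr 1
    rw [map_pow, aeval_X]
    rfl
  simp only [← frobLin_pow_apply F K, ← hφ]
  constructor
  · intro hli
    have hspan : Submodule.span F (Set.range fun i : Fin n => (φ ^ (i : ℕ)) x) = ⊤ :=
      hli.span_eq_top_of_card_eq_finrank (by simp [hn])
    refine (Submodule.restrictScalars_eq_top_iff F F[X] _).mp ?_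
    rw [eq_top_iff]
    have h1 : Submodule.span F ((Module.AEval'.of φ).toLinearMap ''
        (Set.range fun i : Fin n => (φ ^ (i : ℕ)) x)) = ⊤ := by
      rw [Submodule.span_image, hspan, Submodule.map_top, LinearEquiv.range]
    rw [← h1, Submodule.span_le]
    rintro _ ⟨_, ⟨i, rfl⟩, rfl⟩
    show (Module.AEval'.of φ).toLinearMap ((φ ^ (i : ℕ)) x)
      ∈ (Submodule.span F[X] {Module.AEval'.of φ x}).restrictScalars F
    have : (Module.AEval'.of φ) ((φ ^ (i : ℕ)) x)
        ∈ Submodule.span F[X] {Module.AEval'.of φ x} := by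
      rw [← hXi]
      exact Submodule.smul_mem _ _ (Submodule.mem_span_singleton_self _)
    exact this
  · intro hgen
    refine linearIndependent_of_top_le_span_of_card_eq_finrank ?_ (by simp [hn])
    intro y _
    have hy : (Module.AEval'.of φ) y ∈ Submodule.span F[X] {Module.AEval'.of φ x} := by
      rw [hgen]; trivial
    obtain ⟨g, hg⟩ := Submodule.mem_span_singleton.mp hy
    have hy2 : y = (aeval φ g) x := by
      have := congrArg (Module.AEval'.of φ).symm hg
      rw [Module.AEval.of_symm_smul, LinearEquiv.symm_apply_apply,
        LinearEquiv.symm_apply_apply] at this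
      exact this.symm
    have hy3 : y = ∑ i ∈ Finset.range (g.natDegree + 1), g.coeff i • ((φ ^ i) x) := by
      rw [hy2, aeval_eq_sum_range]
      simp only [LinearMap.coe_sum, Finset.sum_apply, LinearMap.smul_apply]
    rw [hy3]
    refine Submodule.sum_mem _ fun i _ => Submodule.smul_mem _ _ ?_
    have hpowmod : φ ^ i = φ ^ (i % n) := by
      conv_lhs => rw [← Nat.div_add_mod i n]
      rw [pow_add, pow_mul, hmod, one_pow, one_mul]
    rw [hpowmod]
    exact Submodule.subset_span ⟨⟨i % n, Nat.mod_lt _ hn0⟩, rfl⟩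

end Main

lemma span_singleton_eq_top_iff_isUnit (r : F[X] ⧸ Ideal.span {(X : F[X]) ^ n - 1}) :
    Submodule.span F[X] {r} = ⊤ ↔ IsUnit r := by
  have hsmul_mk : ∀ (g : F[X]) (z : F[X] ⧸ Ideal.span {(X : F[X]) ^ n - 1}),
      g • z = Ideal.Quotient.mk _ g * z := by
    intro g z
    obtain ⟨a, rfl⟩ := Ideal.Quotient.mk_surjective z
    rw [← map_mul]
    rfl
  constructor
  · intro h
    have h1 : (1 : F[X] ⧸ Ideal.span {(X : F[X]) ^ n - 1}) ∈ Submodule.span F[X] {r} := by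
      rw [h]; trivial
    obtain ⟨g, hg⟩ := Submodule.mem_span_singleton.mp h1
    rw [hsmul_mk] at hg
    exact IsUnit.of_mul_eq_one _ (by rw [mul_comm]; exact hg)
  · intro h
    rw [eq_top_iff]
    rintro y -
    obtain ⟨u, rfl⟩ := h
    obtain ⟨g, hg⟩ := Ideal.Quotient.mk_surjective
      (y * (↑u⁻¹ : F[X] ⧸ Ideal.span {(X : F[X]) ^ n - 1}))
    refine Submodule.mem_span_singleton.mpr ⟨g, ?_⟩
    rw [hsmul_mk, hg]
    exact Units.inv_mul_cancel_right y u

end NormalCount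

/-- The number of normal elements of `K` over `F` (elements whose conjugates
`η, η^q, …, η^{q^{n−1}}` are linearly independent over `F`) equals `Φ(xⁿ − 1)`, the
number of units of the quotient ring `F[x]/(xⁿ − 1)`. -/
theorem stmt13 (F K : Type*) [Field F] [Fintype F] [Field K] [Fintype K] [Algebra F K]
    (n : ℕ) (hn : Module.finrank F K = n) :
    Set.ncard {η : K | LinearIndependent F (fun i : Fin n => η ^ Fintype.card F ^ (i : ℕ))}
      = Nat.card (Polynomial F ⧸ Ideal.span {(X : Polynomial F) ^ n - 1})ˣ := by
  classical
  have hn0 : 0 < n := by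
    rw [← hn]
    exact Module.finrank_pos
  obtain ⟨E⟩ := exists_equiv_quot n hn hn0
  set R₀ := F[X] ⧸ Ideal.span {(X : F[X]) ^ n - 1} with hR₀
  set Φ : K ≃ R₀ := (Module.AEval'.of (frobLin F K)).toEquiv.trans E.toEquiv with hΦ
  have hiff : ∀ x : K,
      LinearIndependent F (fun i : Fin n => x ^ Fintype.card F ^ (i : ℕ)) ↔ IsUnit (Φ x) := by
    intro x
    rw [normal_iff_gen n hn hn0 x, ← span_singleton_eq_top_iff_isUnit n]
    have hΦx : (Φ x : R₀) = E (Module.AEval'.of (frobLin F K) x) := rfl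
    rw [hΦx]
    constructor
    · intro h
      have h2 := congrArg (Submodule.map E.toLinearMap) h
      rwa [Submodule.map_span, Set.image_singleton, Submodule.map_top,
        LinearEquiv.range] at h2
    · intro h
      have h2 := congrArg (Submodule.map E.symm.toLinearMap) h
      rwa [Submodule.map_span, Set.image_singleton, Submodule.map_top,
        LinearEquiv.range, LinearEquiv.coe_coe, LinearEquiv.symm_apply_apply] at h2
  have e2 : R₀ˣ ≃ {r : R₀ // IsUnit r} :=
    { toFun := fun u => ⟨u, u.isUnit⟩
      invFun := fun r => r.prop.unit
      left_inv := fun u => Units.ext u.isUnit.unit_spec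
      right_inv := fun r => Subtype.ext r.prop.unit_spec }
  calc Set.ncard {η : K | LinearIndependent F
        (fun i : Fin n => η ^ Fintype.card F ^ (i : ℕ))}
      = Nat.card {η : K // LinearIndependent F
        (fun i : Fin n => η ^ Fintype.card F ^ (i : ℕ))} :=
        (Nat.card_coe_set_eq _).symm
    _ = Nat.card {r : R₀ // IsUnit r} := Nat.card_congr (Equiv.subtypeEquiv Φ hiff)
    _ = Nat.card R₀ˣ := Nat.card_congr e2.symm
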